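/- Let C be a triangulated category, Q the heart of a bounded t-structure on C with cohomology functors H^i : C → Q, and let N ⊆ C be a thick subcategory such that Q ∩ N is a Serre subcategory of Q. Then the full subcategory C_0 := { F ∈ C | H^i(F) ∈ N for all i ∈ ℤ } is a thick subcategory of C; that is, C_0 is closed under shifts, under cones of morphisms between its objects (equivalently, in any distinguished triangle F_1 → F_2 → F_3 with two of the vertices in C_0, the third vertex also lies in C_0), and under direct summands. -/

import Mathlib

open CategoryTheory CategoryTheory.Limits CategoryTheory.Category ZeroObject
  CategoryTheory.Pretriangulated CategoryTheory.Triangulated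

namespace PaperFormal

variable {C : Type*} [Category C] [HasZeroObject C] [HasShift C ℤ]
  [Preadditive C] [∀ n : ℤ, (shiftFunctor C n).Additive] [Pretriangulated C]

/-- A thick subcategory of a (pre)triangulated category, encoded as a predicate on objects:
it contains the zero object, and is closed under isomorphisms, shifts, extensions
(in any distinguished triangle, if the two outer objects satisfy the predicate, so does the
middle one) and direct summands. -/
structure IsThickSubcategory (N : C → Prop) : Prop where
  zero : N 0
  mem_of_iso : ∀ {X Y : C}, (X ≅ Y) → N X → N Y
  shift : ∀ (X : C) (n : ℤ), N X → N (X⟦n⟧)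
  ext₂ : ∀ T : Triangle C, (T ∈ distTriang C) → N T.obj₁ → N T.obj₃ → N T.obj₂
  summand : ∀ (X Y : C) (s : X ⟶ Y) (r : Y ⟶ X), s ≫ r = 𝟙 X → N Y → N X

/-- `N` is the smallest thick subcategory of `C` containing the object `A`:
`N` is thick, contains `A`, and is contained in any thick subcategory containing `A`. -/
def IsThickGeneratedBy (N : C → Prop) (A : C) : Prop :=
  IsThickSubcategory N ∧ N A ∧
    ∀ N' : C → Prop, IsThickSubcategory N' → N' A → ∀ X : C, N X → N' X

/-- A Serre subcategory of an abelian category: a full subcategory (encoded as a predicate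
on objects) closed under subobjects, quotients and extensions. -/
structure IsSerreSubcategory {A : Type*} [Category A] [Abelian A] (P : A → Prop) : Prop where
  mem_of_mono : ∀ {X Y : A} (f : X ⟶ Y), Mono f → P Y → P X
  mem_of_epi : ∀ {X Y : A} (f : X ⟶ Y), Epi f → P X → P Y
  mem_of_extension : ∀ S : ShortComplex A, S.ShortExact → P S.X₁ → P S.X₃ → P S.X₂

/-- The objects of `C` lying in the image of the heart, i.e. isomorphic to the image of an
object of `Q` under the embedding `ι : Q ⥤ C`. -/
def heartProp {Q : Type*} [Category Q] (ι : Q ⥤ C) : C → Prop :=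
  fun X => ∃ a : Q, Nonempty (ι.obj a ≅ X)

/-- The data exhibiting an abelian category `Q`, fully faithfully embedded in a
(pre)triangulated category `C` via `ι : Q ⥤ C`, as the heart of a bounded t-structure on `C`,
together with the associated cohomology functors `H^i : C ⥤ Q` and their standard
properties: normalization on the heart, compatibility with shifts, boundedness
(every object has only finitely many nonzero cohomology objects), the long exact
cohomology sequence associated to a distinguished triangle, and the cohomological
filtration of any object. -/
structure HeartOfBoundedTStructure (Q : Type*) [Category Q] [Abelian Q] (ι : Q ⥤ C) where
  /-- the embedding of the heart is full -/
  full : ι.Full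
  /-- the embedding of the heart is faithful -/
  faithful : ι.Faithful
  /-- the underlying t-structure on `C` -/
  t : TStructure C
  /-- the image of `Q` is exactly the heart of the t-structure `t` -/
  heart_iff : ∀ X : C, heartProp ι X ↔ (t.le 0 X ∧ t.ge 0 X)
  /-- the t-structure is bounded -/
  t_bounded : ∀ X : C, (∃ n : ℤ, t.le n X) ∧ (∃ n : ℤ, t.ge n X)
  /-- the cohomology functors `H^i : C ⥤ Q` -/
  H (i : ℤ) : C ⥤ Q
  H_shift (i n : ℤ) (X : C) : (H i).obj (X⟦n⟧) ≅ (H (i + n)).obj X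
  H_heart_zero (a : Q) : (H 0).obj (ι.obj a) ≅ a
  H_heart_ne_zero (a : Q) (i : ℤ) (hi : i ≠ 0) : IsZero ((H i).obj (ι.obj a))
  /-- boundedness: every object has only finitely many nonzero cohomology objects -/
  bounded (X : C) : ∃ a b : ℤ, ∀ i : ℤ, (i < a ∨ b < i) → IsZero ((H i).obj X)
  /-- connecting morphisms of the long exact cohomology sequence -/
  δ (T : Triangle C) (hT : T ∈ distTriang C) (i : ℤ) :
    (H i).obj T.obj₃ ⟶ (H (i + 1)).obj T.obj₁
  comp_zero₁ (T : Triangle C) (hT : T ∈ distTriang C) (i : ℤ) :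
    (H i).map T.mor₁ ≫ (H i).map T.mor₂ = 0
  comp_zero₂ (T : Triangle C) (hT : T ∈ distTriang C) (i : ℤ) :
    (H i).map T.mor₂ ≫ δ T hT i = 0
  comp_zero₃ (T : Triangle C) (hT : T ∈ distTriang C) (i : ℤ) :
    δ T hT i ≫ (H (i + 1)).map T.mor₁ = 0
  exact₁ (T : Triangle C) (hT : T ∈ distTriang C) (i : ℤ) :
    (ShortComplex.mk _ _ (comp_zero₁ T hT i)).Exact
  exact₂ (T : Triangle C) (hT : T ∈ distTriang C) (i : ℤ) :
    (ShortComplex.mk _ _ (comp_zero₂ T hT i)).Exact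
  exact₃ (T : Triangle C) (hT : T ∈ distTriang C) (i : ℤ) :
    (ShortComplex.mk _ _ (comp_zero₃ T hT i)).Exact
  /-- every object admits a finite filtration with subquotients the shifted
  cohomology objects `H^k(X)⟦-k⟧` -/
  filtration (X : C) : ∃ (a b : ℤ) (F : ℤ → C), IsZero (F (a - 1)) ∧ Nonempty (F b ≅ X) ∧
    ∀ k : ℤ, ∃ (f : F (k - 1) ⟶ F k) (g : F k ⟶ (ι.obj ((H k).obj X))⟦(-k)⟧)
      (h : (ι.obj ((H k).obj X))⟦(-k)⟧ ⟶ (F (k - 1))⟦(1 : ℤ)⟧),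
      Triangle.mk f g h ∈ distTriang C

/-- A full subcategory of `C` (encoded as a predicate on objects) is the heart of a
bounded t-structure on `C`. -/
def IsHeartOfBoundedTStructure (P : C → Prop) : Prop :=
  ∃ t : TStructure C,
    (∀ X : C, (∃ n : ℤ, t.le n X) ∧ (∃ n : ℤ, t.ge n X)) ∧
    (∀ X : C, P X ↔ (t.le 0 X ∧ t.ge 0 X))



private lemma serre_ext {A : Type*} [Category A] [Abelian A] {P : A → Prop}
    (hP : IsSerreSubcategory P) (S : ShortComplex A) (hS : S.Exact)
    (h1 : P S.X₁) (h3 : P S.X₃) : P S.X₂ := by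
  have hepi : Epi (kernel.lift S.g S.f S.zero) :=
    (ShortComplex.exact_iff_epi_kernel_lift S).1 hS
  have hker : P (kernel S.g) := hP.mem_of_epi (kernel.lift S.g S.f S.zero) hepi h1
  have himg : P (image S.g) := hP.mem_of_mono (image.ι S.g) inferInstance h3
  have w : kernel.ι S.g ≫ factorThruImage S.g = 0 := by
    rw [← cancel_mono (image.ι S.g)]
    simp [kernel.condition]
  have hex : (ShortComplex.mk (kernel.ι S.g) (factorThruImage S.g) w).Exact := by
    rw [ShortComplex.exact_iff_exact_up_to_refinements]
    intro A' x₂ hx₂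
    have hx₂' : x₂ ≫ S.g = 0 := by
      have := hx₂ =≫ image.ι S.g
      simpa using this
    exact ⟨A', 𝟙 A', inferInstance, kernel.lift S.g x₂ hx₂', by simp⟩
  have hse : (ShortComplex.mk (kernel.ι S.g) (factorThruImage S.g) w).ShortExact :=
    { exact := hex }
  exact hP.mem_of_extension (ShortComplex.mk (kernel.ι S.g) (factorThruImage S.g) w) hse hker himg

theorem statement_3 [IsTriangulated C]
    (Q : Type*) [Category Q] [Abelian Q] (ι : Q ⥤ C)
    (hQ : HeartOfBoundedTStructure Q ι)
    (N : C → Prop) (hN : IsThickSubcategory N)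
    (hSerre : IsSerreSubcategory (fun a : Q => N (ι.obj a))) :
    IsThickSubcategory (fun F : C => ∀ i : ℤ, N (ι.obj ((hQ.H i).obj F))) := by
  -- every cohomology of the zero object is zero
  have hz : ∀ i : ℤ, IsZero ((hQ.H i).obj (0 : C)) := by
    intro i
    obtain ⟨a, b, hb⟩ := hQ.bounded (0 : C)
    have e1 : (hQ.H i).obj (0 : C) ≅ (hQ.H i).obj ((0 : C)⟦b + 1 - i⟧) :=
      (hQ.H i).mapIso (shiftFunctor C (b + 1 - i)).mapZeroObject.symm
    have e2 := hQ.H_shift i (b + 1 - i) (0 : C)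
    have h0 : IsZero ((hQ.H (i + (b + 1 - i))).obj (0 : C)) := hb _ (Or.inr (by omega))
    exact h0.of_iso (e1 ≪≫ e2)
  -- some object of the heart is isomorphic to 0, and it lies in N
  obtain ⟨a₀, ⟨e₀⟩⟩ : heartProp ι (0 : C) := by
    rw [hQ.heart_iff]
    obtain ⟨⟨n, hn⟩, ⟨m, hm⟩⟩ := hQ.t_bounded (0 : C)
    constructor
    · have := hQ.t.le_shift n n 0 (by omega) _ hn
      exact ((hQ.t.le 0).prop_iff_of_iso (shiftFunctor C n).mapZeroObject).1 this
    · have := hQ.t.ge_shift m m 0 (by omega) _ hm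
      exact ((hQ.t.ge 0).prop_iff_of_iso (shiftFunctor C m).mapZeroObject).1 this
  have ha₀ : N (ι.obj a₀) := hN.mem_of_iso e₀.symm hN.zero
  constructor
  · -- zero
    intro i
    have : Mono (0 : (hQ.H i).obj (0 : C) ⟶ a₀) :=
      ⟨fun g h _ => (hz i).eq_of_tgt g h⟩
    exact hSerre.mem_of_mono (0 : (hQ.H i).obj (0 : C) ⟶ a₀) this ha₀
  · -- closed under iso
    intro X Y e hX i
    exact hN.mem_of_iso (ι.mapIso ((hQ.H i).mapIso e)) (hX i)
  · -- shifts
    intro X n hX i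
    exact hN.mem_of_iso (ι.mapIso (hQ.H_shift i n X).symm) (hX (i + n))
  · -- extensions
    intro T hT h1 h3 i
    exact serre_ext hSerre _ (hQ.exact₁ T hT i) (h1 i) (h3 i)
  · -- summands
    intro X Y s r hsr hY i
    have : ((hQ.H i).map s) ≫ ((hQ.H i).map r) = 𝟙 _ := by
      rw [← (hQ.H i).map_comp, hsr, (hQ.H i).map_id]
    haveI : IsSplitMono ((hQ.H i).map s) := IsSplitMono.mk' ⟨(hQ.H i).map r, this⟩
    have hmono : Mono ((hQ.H i).map s) := inferInstance
    exact hSerre.mem_of_mono ((hQ.H i).map s) hmono (hY i)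


end PaperFormal
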